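/- For all smooth vector fields A, B: ℝ³ → ℝ³ the quasi-isomorphism relation determining b̃₂ on two gauge fields holds: for each index a, Σ_{i,b,c} v_i ε_{abc}( A_c ∂_bB_i + ∂_bA_i B_c ) = −(v·B)(curl A)_a − (v·A)(curl B)_a + ( curl( (v·A)B + (v·B)A ) )_a; equivalently b̃₂(A,B) = F₂(curl A, B) + F₂(A, curl B) − b₁(F₂(A,B)) with b₁ = curl on gauge fields. -/

import Mathlib

/- STATEMENT 2: quasi-isomorphism relation determining b̃₂ on two gauge fields:
b̃₂(A,B) = F₂(curl A, B) + F₂(A, curl B) − b₁(F₂(A,B)) with b₁ = curl. -/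

noncomputable section

abbrev V3 := Fin 3 → ℝ

/-- Partial derivative ∂_i f at x. -/
def pd (f : V3 → ℝ) (i : Fin 3) (x : V3) : ℝ :=
  fderiv ℝ f x (Pi.single i 1)

/-- Levi-Civita symbol ε_{abc} on Fin 3. -/
def eps (a b c : Fin 3) : ℝ :=
  (((b : ℕ) : ℝ) - ((a : ℕ) : ℝ)) * (((c : ℕ) : ℝ) - ((b : ℕ) : ℝ)) *
    (((c : ℕ) : ℝ) - ((a : ℕ) : ℝ)) / 2

/-- (curl A)_a = Σ_{b,c} ε_{abc} ∂_b A_c. -/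
def curl (A : V3 → V3) (a : Fin 3) (x : V3) : ℝ :=
  ∑ b, ∑ c, eps a b c * pd (fun y => A y c) b x

/-- b̃₂(A,B)_a = Σ_{i,b,c} v_i ε_{abc}(A_c ∂_b B_i + ∂_b A_i B_c). -/
def b2g (v : V3) (A B : V3 → V3) (x : V3) (a : Fin 3) : ℝ :=
  ∑ i, ∑ b, ∑ c, v i * eps a b c *
    (A x c * pd (fun y => B y i) b x + pd (fun y => A y i) b x * B x c)

lemma pd_add (f g : V3 → ℝ) (hf : Differentiable ℝ f) (hg : Differentiable ℝ g)
    (b : Fin 3) (x : V3) :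
    pd (fun y => f y + g y) b x = pd f b x + pd g b x := by
  simp [pd, fderiv_fun_add (hf x) (hg x)]

lemma pd_mul (f g : V3 → ℝ) (hf : Differentiable ℝ f) (hg : Differentiable ℝ g)
    (b : Fin 3) (x : V3) :
    pd (fun y => f y * g y) b x = pd f b x * g x + f x * pd g b x := by
  simp [pd, fderiv_fun_mul (hf x) (hg x)]; ring

lemma pd_const_mul (c : ℝ) (f : V3 → ℝ) (hf : Differentiable ℝ f)
    (b : Fin 3) (x : V3) :
    pd (fun y => c * f y) b x = c * pd f b x := by
  simp [pd, fderiv_const_mul (hf x) c]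

lemma pd_sum (v : V3) (A : V3 → V3) (hA : Differentiable ℝ A)
    (b : Fin 3) (x : V3) :
    pd (fun y => ∑ i, v i * A y i) b x = ∑ i, v i * pd (fun y => A y i) b x := by
  have hdi : ∀ i : Fin 3, Differentiable ℝ fun y => A y i := fun i =>
    differentiable_pi.mp hA i
  have : (fun y => ∑ i, v i * A y i)
      = fun y => v 0 * A y 0 + v 1 * A y 1 + v 2 * A y 2 := by
    funext y; simp [Fin.sum_univ_three]
  rw [this, Fin.sum_univ_three,
    pd_add (fun y => v 0 * A y 0 + v 1 * A y 1) (fun y => v 2 * A y 2) (((hdi 0).const_mul _).add ((hdi 1).const_mul _)) ((hdi 2).const_mul _),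
    pd_add (fun y => v 0 * A y 0) (fun y => v 1 * A y 1) ((hdi 0).const_mul _) ((hdi 1).const_mul _),
    pd_const_mul _ _ (hdi 0), pd_const_mul _ _ (hdi 1), pd_const_mul _ _ (hdi 2)]

theorem deformed_CS_QISO_b2_on_gauge_fields
    (v : V3) (A B : V3 → V3)
    (hA : ContDiff ℝ (⊤ : ℕ∞) A) (hB : ContDiff ℝ (⊤ : ℕ∞) B) :
    ∀ (a : Fin 3) (x : V3),
      b2g v A B x a
        = -(∑ i, v i * B x i) * curl A a x
          - (∑ i, v i * A x i) * curl B a x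
          + curl (fun y b =>
              (∑ i, v i * A y i) * B y b + (∑ i, v i * B y i) * A y b) a x := by
  intro a x
  have hdA : Differentiable ℝ A := hA.differentiable (by simp)
  have hdB : Differentiable ℝ B := hB.differentiable (by simp)
  have hAi : ∀ i : Fin 3, Differentiable ℝ fun y => A y i := fun i =>
    differentiable_pi.mp hdA i
  have hBi : ∀ i : Fin 3, Differentiable ℝ fun y => B y i := fun i =>
    differentiable_pi.mp hdB i
  have hSA : Differentiable ℝ fun y => ∑ i, v i * A y i := by
    apply Differentiable.fun_sum; intro i _; exact (hAi i).const_mul _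
  have hSB : Differentiable ℝ fun y => ∑ i, v i * B y i := by
    apply Differentiable.fun_sum; intro i _; exact (hBi i).const_mul _
  have key : ∀ (b c : Fin 3),
      pd (fun y => (∑ i, v i * A y i) * B y c + (∑ i, v i * B y i) * A y c) b x
        = (∑ i, v i * pd (fun y => A y i) b x) * B x c
          + (∑ i, v i * A x i) * pd (fun y => B y c) b x
          + (∑ i, v i * pd (fun y => B y i) b x) * A x c
          + (∑ i, v i * B x i) * pd (fun y => A y c) b x := by
    intro b c
    rw [pd_add (fun y => (∑ i, v i * A y i) * B y c) (fun y => (∑ i, v i * B y i) * A y c) (hSA.mul (hBi c)) (hSB.mul (hAi c)),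
      pd_mul _ _ hSA (hBi c), pd_mul _ _ hSB (hAi c),
      pd_sum v A hdA, pd_sum v B hdB]
    ring
  simp only [b2g, curl, key]
  simp only [Fin.sum_univ_three]
  fin_cases a <;> norm_num [eps] <;> ring
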